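/- Let G be a POMDP with absorbing target set T and with Supp(λ0) ∈ BeliefWin(G,T), and let σ be a strategy. If with positive probability under σ a finite history w is reached whose belief-support U belongs to BeliefWin(G,T) and σ plays after w some action a ∉ Allow(U) with positive probability, then σ is not almost-sure winning for Reach(T). -/

import Mathlib

open Finset Filter
open scoped Classical

set_option linter.unusedSectionVars false

noncomputable section

/-- A finite history of a play: the current state together with the
(reversed) list of past steps; an entry `(a, s')` means: the action `a`
was taken from the state `s'` (leading to the next recorded state). -/
abbrev Hist (S A : Type) := S × List (A × S)

/-- The observation–action sequence of a history. -/
def obsHist {S A Z : Type} (O : S → Z) (h : Hist S A) : Z × List (A × Z) :=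
  (O h.1, h.2.map fun p => (p.1, O p.2))

/-- An observation-based (randomized, history-dependent) strategy. -/
structure Strategy (S A Z : Type) [Fintype A] (O : S → Z) where
  act : Hist S A → A → ℝ
  act_nonneg : ∀ h a, 0 ≤ act h a
  act_sum : ∀ h, ∑ a, act h a = 1
  obsBased : ∀ h h', obsHist O h = obsHist O h' → act h = act h'

/-- A partially observable Markov decision process. -/
structure POMDP (S A Z : Type) [Fintype S] [Fintype A] [Fintype Z] where
  δ : S → A → S → ℝ
  δ_nonneg : ∀ s a s', 0 ≤ δ s a s'
  δ_sum : ∀ s a, ∑ s', δ s a s' = 1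
  obs : S → Z
  init : S → ℝ
  init_nonneg : ∀ s, 0 ≤ init s
  init_sum : ∑ s, init s = 1
  init_obs : ∀ s s', 0 < init s → 0 < init s' → obs s = obs s'

namespace POMDP

variable {S A Z : Type} [Fintype S] [Fintype A] [Fintype Z]

/-- The target set `T` consists of absorbing states. -/
def Absorbing (M : POMDP S A Z) (T : Set S) : Prop :=
  ∀ t ∈ T, ∀ a, M.δ t a t = 1

/-- Probability that after `n` steps the process has followed exactly the
history `(s, l)` (so `l` has length `n`). -/
def hprobAux (M : POMDP S A Z) (σ : Strategy S A Z M.obs) : ℕ → S → List (A × S) → ℝ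
  | 0, s, l => if l = [] then M.init s else 0
  | n+1, s, l =>
    match l with
    | [] => 0
    | (a, s') :: rest => hprobAux M σ n s' rest * σ.act (s', rest) a * M.δ s' a s

def hprob (M : POMDP S A Z) (σ : Strategy S A Z M.obs) (n : ℕ) (h : Hist S A) : ℝ :=
  M.hprobAux σ n h.1 h.2

/-- The state sequence of a history visits the set `T`. -/
def visitsT (T : Set S) (h : Hist S A) : Prop :=
  h.1 ∈ T ∨ ∃ p ∈ h.2, p.2 ∈ T

/-- Probability of reaching `T` within the first `n` steps. -/
def probReachBy (M : POMDP S A Z) (T : Set S) (σ : Strategy S A Z M.obs) (n : ℕ) : ℝ :=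
  ∑' h : Hist S A, if visitsT T h then M.hprob σ n h else 0

/-- Probability of the reachability objective `Reach(T)`. -/
def probReach (M : POMDP S A Z) (T : Set S) (σ : Strategy S A Z M.obs) : ℝ :=
  ⨆ n, M.probReachBy T σ n

/-- The strategy `σ` is almost-sure winning for `Reach(T)`. -/
def AlmostSure (M : POMDP S A Z) (T : Set S) (σ : Strategy S A Z M.obs) : Prop :=
  M.probReach T σ = 1

/-- Accumulated cost along a history. -/
def totalCostAux (c : S → A → ℝ) : S → List (A × S) → ℝ
  | _, [] => 0
  | _, (a, s') :: rest => totalCostAux c s' rest + c s' a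

def totalCostH (c : S → A → ℝ) (h : Hist S A) : ℝ := totalCostAux c h.1 h.2

/-- Expected total cost of the first `n` steps, i.e. `E[Total_{n-1}]`
(in particular `E[Total_k] = expTotalSteps M c σ (k+1)`). -/
def expTotalSteps (M : POMDP S A Z) (c : S → A → ℝ) (σ : Strategy S A Z M.obs) (n : ℕ) : ℝ :=
  ∑' h : Hist S A, M.hprob σ n h * totalCostH c h

/-- The value `Val(σ) = E[Total]` of a strategy, as the limit (limsup) of the
expected costs of the finite prefixes. -/
def Val (M : POMDP S A Z) (c : S → A → ℝ) (σ : Strategy S A Z M.obs) : EReal :=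
  Filter.limsup (fun n => ((M.expTotalSteps c σ n : ℝ) : EReal)) Filter.atTop

/-- `optCost`: the infimum of the values of almost-sure winning strategies. -/
def optCost (M : POMDP S A Z) (T : Set S) (c : S → A → ℝ) : EReal :=
  ⨅ σ : {σ : Strategy S A Z M.obs // M.AlmostSure T σ}, M.Val c σ.1

end POMDP

namespace POMDP

variable {S A Z : Type} [Fintype S] [Fintype A] [Fintype Z]

/-- Uniform distribution over a finite set of states. -/
def uniformS (U : Finset S) : S → ℝ := fun s => if s ∈ U then ((U.card : ℝ))⁻¹ else 0

lemma uniformS_nonneg (U : Finset S) (s : S) : 0 ≤ uniformS U s := by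
  unfold uniformS; split_ifs <;> positivity

lemma uniformS_sum (U : Finset S) (h : U.Nonempty) : ∑ s, uniformS U s = 1 := by
  unfold uniformS
  rw [Finset.sum_ite_mem, Finset.univ_inter, Finset.sum_const, nsmul_eq_mul,
    mul_inv_cancel₀]
  exact_mod_cast Finset.card_ne_zero.mpr h

lemma uniformS_mem {U : Finset S} {s : S} (h : 0 < uniformS U s) : s ∈ U := by
  by_contra hc; simp [uniformS, hc] at h

/-- The POMDP `M` with the initial distribution replaced by the uniform
distribution over `U`. -/
def reinit (M : POMDP S A Z) (U : Finset S) (hU : U.Nonempty)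
    (hobs : ∀ s ∈ U, ∀ s' ∈ U, M.obs s = M.obs s') : POMDP S A Z :=
  { M with
    init := uniformS U
    init_nonneg := uniformS_nonneg U
    init_sum := uniformS_sum U hU
    init_obs := fun s s' hs hs' => hobs s (uniformS_mem hs) s' (uniformS_mem hs') }

/-- The POMDP `M` with the initial distribution replaced by the Dirac
distribution at `s0`. -/
def resetDirac (M : POMDP S A Z) (s0 : S) : POMDP S A Z :=
  { M with
    init := fun s => if s = s0 then 1 else 0
    init_nonneg := by intro s; split_ifs <;> norm_num
    init_sum := by simp
    init_obs := by
      intro s s' hs hs'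
      have h1 : s = s0 := by by_contra hc; simp [hc] at hs
      have h2 : s' = s0 := by by_contra hc; simp [hc] at hs'
      rw [h1, h2] }

/-- The set of almost-sure winning belief-supports: those `U` from which
(with the uniform initial distribution on `U`) some strategy wins
`Reach(T)` almost-surely. -/
def BeliefWin (M : POMDP S A Z) (T : Set S) : Set (Finset S) :=
  {U | ∃ (hU : U.Nonempty) (hobs : ∀ s ∈ U, ∀ s' ∈ U, M.obs s = M.obs s'),
      ∃ σ : Strategy S A Z M.obs, (M.reinit U hU hobs).AlmostSure T σ}

/-- Belief-support update. -/
def updateF (M : POMDP S A Z) (U : Finset S) (z : Z) (a : A) : Finset S :=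
  univ.filter (fun t => M.obs t = z ∧ ∃ s ∈ U, 0 < M.δ s a t)

/-- Allowed actions at a belief-support `U`. -/
def AllowSet (M : POMDP S A Z) (T : Set S) (U : Finset S) : Set A :=
  {a | ∀ z, (M.updateF U z a).Nonempty → M.updateF U z a ∈ M.BeliefWin T}

def allowFin (M : POMDP S A Z) (T : Set S) (U : Finset S) : Finset A :=
  univ.filter (· ∈ M.AllowSet T U)

/-- The support of the initial distribution, as a belief-support. -/
def suppInitF (M : POMDP S A Z) : Finset S := univ.filter (fun s => 0 < M.init s)

/-- Belief-support after a history, starting from the initial belief-support `U0`. -/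
def beliefOfFromAux (M : POMDP S A Z) (U0 : Finset S) : S → List (A × S) → Finset S
  | s, [] => U0.filter (fun t => M.obs t = M.obs s)
  | s, (a, s') :: rest => M.updateF (M.beliefOfFromAux U0 s' rest) (M.obs s) a

def beliefOfFrom (M : POMDP S A Z) (U0 : Finset S) (h : Hist S A) : Finset S :=
  M.beliefOfFromAux U0 h.1 h.2

/-- Belief-support after a history (with the initial belief-support being
the support of the initial distribution). -/
def beliefOf (M : POMDP S A Z) (h : Hist S A) : Finset S :=
  M.beliefOfFrom M.suppInitF h

lemma beliefOfFromAux_obs (M : POMDP S A Z) (U0 : Finset S) :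
    ∀ (l l' : List (A × S)) (s s' : S),
      l.map (fun p => (p.1, M.obs p.2)) = l'.map (fun p => (p.1, M.obs p.2)) →
      M.obs s = M.obs s' →
      M.beliefOfFromAux U0 s l = M.beliefOfFromAux U0 s' l'
  | [], [], s, s', _, hs => by simp [beliefOfFromAux, hs]
  | [], (_ :: _), _, _, hmap, _ => by simp at hmap
  | (_ :: _), [], _, _, hmap, _ => by simp at hmap
  | ((a, t) :: r), ((a', t') :: r'), s, s', hmap, hs => by
      simp only [List.map_cons, List.cons.injEq, Prod.mk.injEq] at hmap
      obtain ⟨⟨ha, ht⟩, hr⟩ := hmap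
      simp only [beliefOfFromAux]
      rw [M.beliefOfFromAux_obs U0 r r' t t' hr ht, hs, ha]

/-- Uniform distribution over a finite set of actions. -/
def uniformA (F : Finset A) : A → ℝ := fun a => if a ∈ F then ((F.card : ℝ))⁻¹ else 0

lemma uniformA_nonneg (F : Finset A) (a : A) : 0 ≤ uniformA F a := by
  unfold uniformA; split_ifs <;> positivity

lemma uniformA_sum (F : Finset A) (h : F.Nonempty) : ∑ a, uniformA F a = 1 := by
  unfold uniformA
  rw [Finset.sum_ite_mem, Finset.univ_inter, Finset.sum_const, nsmul_eq_mul,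
    mul_inv_cancel₀]
  exact_mod_cast Finset.card_ne_zero.mpr h

/-- The action distribution of `σ_Allow` (with initial belief-support `U0`):
uniform over the allowed actions of the current belief-support (with a
uniform fallback where no action is allowed). -/
def actAllowFrom (M : POMDP S A Z) (T : Set S) (U0 : Finset S) (h : Hist S A) : A → ℝ :=
  if (M.allowFin T (M.beliefOfFrom U0 h)).Nonempty
  then uniformA (M.allowFin T (M.beliefOfFrom U0 h))
  else uniformA (univ : Finset A)

/-- The belief-support based strategy `σ_Allow` (tracking beliefs from `U0`). -/
def stratAllowFrom [Nonempty A] (M : POMDP S A Z) (T : Set S) (U0 : Finset S) :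
    Strategy S A Z M.obs where
  act := M.actAllowFrom T U0
  act_nonneg := by
    intro h a; unfold actAllowFrom; split_ifs <;> exact uniformA_nonneg _ _
  act_sum := by
    intro h; unfold actAllowFrom; split_ifs with hne
    · exact uniformA_sum _ hne
    · exact uniformA_sum _ univ_nonempty
  obsBased := by
    intro h h' hobs
    have : M.beliefOfFrom U0 h = M.beliefOfFrom U0 h' := by
      unfold beliefOfFrom
      exact M.beliefOfFromAux_obs U0 h.2 h'.2 h.1 h'.1
        (congrArg Prod.snd hobs) (congrArg Prod.fst hobs)
    unfold actAllowFrom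
    rw [this]

/-- `σ_Allow`. -/
def stratAllow [Nonempty A] (M : POMDP S A Z) (T : Set S) : Strategy S A Z M.obs :=
  M.stratAllowFrom T M.suppInitF

/-- `T_Allow(s, U)`: the expected total cost of `σ_Allow` started in the
state `s` with the initial belief-support `U`. -/
def TAllow [Nonempty A] (M : POMDP S A Z) (T : Set S) (c : S → A → ℝ) (s : S) (U : Finset S) :
    EReal :=
  (M.resetDirac s).Val c (M.stratAllowFrom T U)

/-- `U_Allow`: the maximal expected total cost of `σ_Allow` over all
almost-sure winning belief-supports `U` and states `s ∈ U`. -/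
def UAllow [Nonempty A] (M : POMDP S A Z) (T : Set S) (c : S → A → ℝ) : EReal :=
  ⨆ U ∈ M.BeliefWin T, ⨆ s ∈ U, M.TAllow T c s U

end POMDP

namespace POMDP

variable {S A Z : Type} [Fintype S] [Fintype A] [Fintype Z]

/-- Normalization of a nonnegative function into a distribution. -/
def normalize (f : S → ℝ) : S → ℝ := fun t => f t / ∑ u, f u

/-- Support of an information state. -/
def suppF (b : S → ℝ) : Finset S := univ.filter (fun s => b s ≠ 0)

/-- The information state (posterior distribution) after a history. -/
def infoOfAux (M : POMDP S A Z) : S → List (A × S) → S → ℝ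
  | s, [] => normalize (fun t => if M.obs t = M.obs s then M.init t else 0)
  | s, (a, s') :: rest =>
      normalize (fun t => if M.obs t = M.obs s then ∑ u, M.infoOfAux s' rest u * M.δ u a t else 0)

def infoOf (M : POMDP S A Z) (h : Hist S A) : S → ℝ := M.infoOfAux h.1 h.2

lemma infoOfAux_obs (M : POMDP S A Z) :
    ∀ (l l' : List (A × S)) (s s' : S),
      l.map (fun p => (p.1, M.obs p.2)) = l'.map (fun p => (p.1, M.obs p.2)) →
      M.obs s = M.obs s' →
      M.infoOfAux s l = M.infoOfAux s' l'
  | [], [], s, s', _, hs => by simp [infoOfAux, hs]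
  | [], (_ :: _), _, _, hmap, _ => by simp at hmap
  | (_ :: _), [], _, _, hmap, _ => by simp at hmap
  | ((a, t) :: r), ((a', t') :: r'), s, s', hmap, hs => by
      simp only [List.map_cons, List.cons.injEq, Prod.mk.injEq] at hmap
      obtain ⟨⟨ha, ht⟩, hr⟩ := hmap
      simp only [infoOfAux]
      rw [M.infoOfAux_obs r r' t t' hr ht, hs, ha]

/-- Expected one-step cost `c'(b,a)` at an information state. -/
def cinfo (c : S → A → ℝ) (b : S → ℝ) (a : A) : ℝ := ∑ s, b s * c s a

/-- Probability of observing `z` after playing `a` at information state `b`. -/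
def obsProb (M : POMDP S A Z) (b : S → ℝ) (a : A) (z : Z) : ℝ :=
  ∑ t, if M.obs t = z then ∑ u, b u * M.δ u a t else 0

/-- Bayesian update of the information state `b` under action `a` and
observation `z`. -/
def postInfo (M : POMDP S A Z) (b : S → ℝ) (a : A) (z : Z) : S → ℝ :=
  normalize (fun t => if M.obs t = z then ∑ u, b u * M.δ u a t else 0)

/-- The allowed-action-restricted finite-horizon value iteration `V*_n`. -/
def Vstar (M : POMDP S A Z) (T : Set S) (c : S → A → ℝ) : ℕ → (S → ℝ) → ℝ
  | 0, _ => 0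
  | n+1, b =>
    if h : (M.allowFin T (suppF b)).Nonempty then
      (M.allowFin T (suppF b)).inf' h
        (fun a => cinfo c b a + ∑ z, M.obsProb b a z * M.Vstar T c n (M.postInfo b a z))
    else 0

/-- An allowed action attaining the minimum of the value iteration with
`n` steps remaining at information state `b`. -/
def foAct [Nonempty A] (M : POMDP S A Z) (T : Set S) (c : S → A → ℝ) : ℕ → (S → ℝ) → A
  | 0, _ => Classical.arbitrary A
  | n+1, b =>
    if h : (M.allowFin T (suppF b)).Nonempty then
      Classical.choose (Finset.exists_mem_eq_inf' h
        (fun a => cinfo c b a + ∑ z, M.obsProb b a z * M.Vstar T c n (M.postInfo b a z)))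
    else Classical.arbitrary A

/-- The action distribution of the finite-horizon optimal strategy `σFO_k`. -/
def actFO [Nonempty A] (M : POMDP S A Z) (T : Set S) (c : S → A → ℝ) (k : ℕ) (h : Hist S A) :
    A → ℝ :=
  fun a => if a = M.foAct T c (k - h.2.length) (M.infoOf h) then 1 else 0

lemma length_eq_of_obsHist {h h' : Hist S A} {O : S → Z} (he : obsHist O h = obsHist O h') :
    h.2.length = h'.2.length := by
  have := congrArg (fun x => (Prod.snd x).length) he
  simpa [obsHist] using this

/-- The (allowed-action-restricted) finite-horizon optimal strategy `σFO_k`. -/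
def stratFO [Nonempty A] (M : POMDP S A Z) (T : Set S) (c : S → A → ℝ) (k : ℕ) :
    Strategy S A Z M.obs where
  act := M.actFO T c k
  act_nonneg := by intro h a; unfold actFO; split_ifs <;> norm_num
  act_sum := by intro h; unfold actFO; simp
  obsBased := by
    intro h h' hobs
    have hlen : h.2.length = h'.2.length := length_eq_of_obsHist hobs
    have hinfo : M.infoOf h = M.infoOf h' := by
      unfold infoOf
      exact M.infoOfAux_obs h.2 h'.2 h.1 h'.1
        (congrArg Prod.snd hobs) (congrArg Prod.fst hobs)
    unfold actFO
    rw [hlen, hinfo]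

/-- The strategy `σ*_k`: play `σFO_k` for the first `k` steps, then `σ_Allow`. -/
def stratStar [Nonempty A] (M : POMDP S A Z) (T : Set S) (c : S → A → ℝ) (k : ℕ) :
    Strategy S A Z M.obs where
  act := fun h =>
    if h.2.length < k then M.actFO T c k h else M.actAllowFrom T M.suppInitF h
  act_nonneg := by
    intro h a; split_ifs with hl
    · exact (M.stratFO T c k).act_nonneg h a
    · exact (M.stratAllowFrom T M.suppInitF).act_nonneg h a
  act_sum := by
    intro h; split_ifs with hl
    · exact (M.stratFO T c k).act_sum h
    · exact (M.stratAllowFrom T M.suppInitF).act_sum h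
  obsBased := by
    intro h h' hobs
    have hlen : h.2.length = h'.2.length := length_eq_of_obsHist hobs
    rw [hlen]
    split_ifs with hl
    · exact (M.stratFO T c k).obsBased h h' hobs
    · exact (M.stratAllowFrom T M.suppInitF).obsBased h h' hobs

/-- `α_k`: the probability that `T` is not reached within the first `k`
steps when playing `σ*_k`. -/
def alphaK [Nonempty A] (M : POMDP S A Z) (T : Set S) (c : S → A → ℝ) (k : ℕ) : ℝ :=
  1 - M.probReachBy T (M.stratStar T c k) k

end POMDP

namespace POMDP

variable {S A Z : Type} [Fintype S] [Fintype A] [Fintype Z]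

lemma hprobAux_nonneg (M : POMDP S A Z) (σ : Strategy S A Z M.obs) :
    ∀ (n : ℕ) (s : S) (l : List (A × S)), 0 ≤ M.hprobAux σ n s l
  | 0, s, l => by
      unfold hprobAux; split_ifs
      exacts [M.init_nonneg s, le_refl 0]
  | n+1, s, l => by
      match l with
      | [] => simp [hprobAux]
      | (a, s') :: rest =>
        simp only [hprobAux]
        exact mul_nonneg (mul_nonneg (hprobAux_nonneg M σ n s' rest)
          (σ.act_nonneg (s', rest) a)) (M.δ_nonneg s' a s)

lemma hprobAux_length (M : POMDP S A Z) (σ : Strategy S A Z M.obs) :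
    ∀ (n : ℕ) (s : S) (l : List (A × S)), M.hprobAux σ n s l ≠ 0 → l.length = n
  | 0, s, l => by
      unfold hprobAux; intro hne
      by_contra hc
      have : l ≠ [] := by intro h; rw [h] at hc; exact hc rfl
      simp [this] at hne
  | n+1, s, l => by
      match l with
      | [] => simp [hprobAux]
      | (a, s') :: rest =>
        simp only [hprobAux]
        intro hne
        have h1 : M.hprobAux σ n s' rest ≠ 0 := by
          intro h; rw [h] at hne; simp at hne
        simp [hprobAux_length M σ n s' rest h1]

def histFinset (S A : Type) [Fintype S] [Fintype A] (n : ℕ) : Finset (Hist S A) :=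
  (Set.Finite.prod (Set.finite_univ (α := S)) (List.finite_length_eq (A × S) n)).toFinset

lemma mem_histFinset {n : ℕ} {h : Hist S A} : h ∈ histFinset S A n ↔ h.2.length = n := by
  simp [histFinset, Set.Finite.mem_toFinset, Set.mem_prod]

lemma tsum_ite_eq_sum (M : POMDP S A Z) (σ : Strategy S A Z M.obs) (n : ℕ)
    (P : Hist S A → Prop) :
    ∑' h : Hist S A, (if P h then M.hprob σ n h else 0)
      = ∑ h ∈ histFinset S A n, (if P h then M.hprob σ n h else 0) := by
  apply tsum_eq_sum
  intro h hh
  have h0 : M.hprob σ n h = 0 := by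
    by_contra hc
    exact hh (mem_histFinset.mpr (M.hprobAux_length σ n h.1 h.2 hc))
  simp [h0]

lemma probReachBy_eq_sum (M : POMDP S A Z) (T : Set S) (σ : Strategy S A Z M.obs) (n : ℕ) :
    M.probReachBy T σ n = ∑ h ∈ histFinset S A n, (if visitsT T h then M.hprob σ n h else 0) :=
  M.tsum_ite_eq_sum σ n (visitsT T)

lemma histFinset_zero : histFinset S A 0 = (univ : Finset S).image (fun s => ((s, []) : Hist S A)) := by
  ext ⟨s, l⟩
  simp [mem_histFinset, List.length_eq_zero_iff, Prod.ext_iff, eq_comm]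

lemma sum_hist_zero (f : Hist S A → ℝ) :
    ∑ h ∈ histFinset S A 0, f h = ∑ s, f (s, []) := by
  rw [histFinset_zero, Finset.sum_image]
  intro x _ y _ hxy
  exact (Prod.mk.injEq _ _ _ _ ▸ hxy).1

lemma sum_hist_succ [Nonempty S] [Nonempty A] (n : ℕ) (f : Hist S A → ℝ) :
    ∑ h ∈ histFinset S A (n+1), f h
      = ∑ h ∈ histFinset S A n, ∑ p : A × S, f (p.2, (p.1, h.1) :: h.2) := by
  inhabit S; inhabit A
  rw [show (∑ h ∈ histFinset S A n, ∑ p : A × S, f (p.2, (p.1, h.1) :: h.2))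
      = ∑ q ∈ (histFinset S A n) ×ˢ (univ : Finset (A × S)), f (q.2.2, (q.2.1, q.1.1) :: q.1.2)
    from (Finset.sum_product (s := histFinset S A n) (t := (univ : Finset (A × S)))
      (f := fun q : Hist S A × (A × S) => f (q.2.2, (q.2.1, q.1.1) :: q.1.2))).symm]
  refine Finset.sum_bij' (fun h _ => ((h.2.headI.2, h.2.tail), (h.2.headI.1, h.1)))
    (fun q _ => (q.2.2, (q.2.1, q.1.1) :: q.1.2)) ?_ ?_ ?_ ?_ ?_
  · rintro ⟨s, _ | ⟨⟨b, u⟩, l⟩⟩ ha <;>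
      simp [mem_histFinset, Finset.mem_product] at ha ⊢ <;> omega
  · rintro ⟨⟨u, l⟩, ⟨b, s⟩⟩ ha
    simp [mem_histFinset, Finset.mem_product] at ha ⊢
    omega
  · rintro ⟨s, _ | ⟨⟨b, u⟩, l⟩⟩ ha
    · simp [mem_histFinset] at ha
    · simp
  · rintro ⟨⟨u, l⟩, ⟨b, s⟩⟩ ha
    simp
  · rintro ⟨s, _ | ⟨⟨b, u⟩, l⟩⟩ ha
    · simp [mem_histFinset] at ha
    · simp

lemma hprob_sum_ext (M : POMDP S A Z) (σ : Strategy S A Z M.obs) (n : ℕ) (h : Hist S A) :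
    ∑ p : A × S, M.hprob σ (n+1) (p.2, (p.1, h.1) :: h.2) = M.hprob σ n h := by
  rw [Fintype.sum_prod_type]
  have inner : ∀ a : A, ∑ s : S, M.hprob σ (n+1) (s, (a, h.1) :: h.2)
      = M.hprob σ n h * σ.act h a := by
    intro a
    simp only [hprob, hprobAux, Prod.mk.eta]
    rw [← Finset.mul_sum, M.δ_sum, mul_one]
  simp only [inner]
  rw [← Finset.mul_sum, σ.act_sum, mul_one]

lemma sum_hprob [Nonempty S] [Nonempty A] (M : POMDP S A Z) (σ : Strategy S A Z M.obs) :
    ∀ n : ℕ, ∑ h ∈ histFinset S A n, M.hprob σ n h = 1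
  | 0 => by
      rw [sum_hist_zero]
      simpa [hprob, hprobAux] using M.init_sum
  | n+1 => by
      rw [sum_hist_succ]
      simp only [M.hprob_sum_ext σ n]
      exact sum_hprob M σ n

lemma visitsT_cons {T : Set S} {h : Hist S A} (hv : visitsT T h) (p : A × S) :
    visitsT T (p.2, (p.1, h.1) :: h.2) := by
  rcases hv with hv | ⟨q, hq, hqT⟩
  · exact Or.inr ⟨(p.1, h.1), List.mem_cons_self, hv⟩
  · exact Or.inr ⟨q, List.mem_cons_of_mem _ hq, hqT⟩

lemma probReachBy_mono [Nonempty S] [Nonempty A] (M : POMDP S A Z) (T : Set S)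
    (σ : Strategy S A Z M.obs) : Monotone (M.probReachBy T σ) := by
  apply monotone_nat_of_le_succ
  intro n
  rw [probReachBy_eq_sum, probReachBy_eq_sum, sum_hist_succ]
  apply Finset.sum_le_sum
  intro h _
  by_cases hv : visitsT T h
  · rw [if_pos hv]
    calc M.hprob σ n h = ∑ p : A × S, M.hprob σ (n+1) (p.2, (p.1, h.1) :: h.2) :=
          (M.hprob_sum_ext σ n h).symm
      _ ≤ _ := by
          apply Finset.sum_le_sum
          intro p _
          rw [if_pos (visitsT_cons hv p)]
  · rw [if_neg hv]
    apply Finset.sum_nonneg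
    intro p _
    split_ifs
    · exact M.hprobAux_nonneg σ _ _ _
    · exact le_refl 0

lemma probReachBy_nonneg (M : POMDP S A Z) (T : Set S) (σ : Strategy S A Z M.obs) (n : ℕ) :
    0 ≤ M.probReachBy T σ n := by
  rw [probReachBy_eq_sum]
  apply Finset.sum_nonneg
  intro h _
  split_ifs
  · exact M.hprobAux_nonneg σ _ _ _
  · exact le_refl 0

lemma probReachBy_le_one [Nonempty S] [Nonempty A] (M : POMDP S A Z) (T : Set S)
    (σ : Strategy S A Z M.obs) (n : ℕ) : M.probReachBy T σ n ≤ 1 := by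
  rw [probReachBy_eq_sum]
  calc ∑ h ∈ histFinset S A n, (if visitsT T h then M.hprob σ n h else 0)
      ≤ ∑ h ∈ histFinset S A n, M.hprob σ n h := by
        apply Finset.sum_le_sum
        intro h _
        split_ifs
        · exact le_refl _
        · exact M.hprobAux_nonneg σ _ _ _
    _ = 1 := M.sum_hprob σ n

lemma probReachBy_bddAbove [Nonempty S] [Nonempty A] (M : POMDP S A Z) (T : Set S)
    (σ : Strategy S A Z M.obs) : BddAbove (Set.range (M.probReachBy T σ)) := by
  refine ⟨1, ?_⟩
  rintro x ⟨n, rfl⟩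
  exact M.probReachBy_le_one T σ n

lemma probReachBy_le_probReach [Nonempty S] [Nonempty A] (M : POMDP S A Z) (T : Set S)
    (σ : Strategy S A Z M.obs) (n : ℕ) : M.probReachBy T σ n ≤ M.probReach T σ :=
  le_ciSup (M.probReachBy_bddAbove T σ) n

lemma probReach_le_one [Nonempty S] [Nonempty A] (M : POMDP S A Z) (T : Set S)
    (σ : Strategy S A Z M.obs) : M.probReach T σ ≤ 1 :=
  ciSup_le (M.probReachBy_le_one T σ)

lemma hprob_congr (M : POMDP S A Z) (σ₁ σ₂ : Strategy S A Z M.obs) (hact : σ₁.act = σ₂.act) :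
    ∀ (n : ℕ) (s : S) (l : List (A × S)), M.hprobAux σ₁ n s l = M.hprobAux σ₂ n s l
  | 0, s, l => rfl
  | n+1, s, l => by
      match l with
      | [] => rfl
      | (a, s') :: rest =>
        simp only [hprobAux]
        rw [hprob_congr M σ₁ σ₂ hact n s' rest, hact]

lemma probReach_congr (M : POMDP S A Z) (T : Set S) (σ₁ σ₂ : Strategy S A Z M.obs)
    (hact : σ₁.act = σ₂.act) : M.probReach T σ₁ = M.probReach T σ₂ := by
  unfold probReach probReachBy hprob
  simp only [hprob_congr M σ₁ σ₂ hact]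

lemma hprobAux_reinit (M : POMDP S A Z) (U : Finset S) (hU : U.Nonempty)
    (hobs : ∀ s ∈ U, ∀ s' ∈ U, M.obs s = M.obs s') (σ : Strategy S A Z M.obs) :
    ∀ (n : ℕ) (s : S) (l : List (A × S)),
      (M.reinit U hU hobs).hprobAux σ n s l
        = (U.card : ℝ)⁻¹ * ∑ t ∈ U, (M.resetDirac t).hprobAux σ n s l
  | 0, s, l => by
      show (if l = [] then (M.reinit U hU hobs).init s else 0)
        = (U.card : ℝ)⁻¹ * ∑ t ∈ U, (if l = [] then (M.resetDirac t).init s else 0)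
      split_ifs with hl
      · simp only [reinit, resetDirac, uniformS]
        rw [Finset.sum_ite_eq]
        split_ifs with hs <;> simp
      · simp
  | n+1, s, l => by
      match l with
      | [] => simp [hprobAux]
      | (a, s') :: rest =>
        simp only [hprobAux]
        rw [hprobAux_reinit M U hU hobs σ n s' rest]
        show ((U.card : ℝ)⁻¹ * ∑ t ∈ U, (M.resetDirac t).hprobAux σ n s' rest)
            * σ.act (s', rest) a * M.δ s' a s
          = (U.card : ℝ)⁻¹ * ∑ t ∈ U, (M.resetDirac t).hprobAux σ n s' rest
            * σ.act (s', rest) a * M.δ s' a s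
        simp only [mul_assoc, Finset.sum_mul]

lemma probReachBy_reinit (M : POMDP S A Z) (T : Set S) (U : Finset S) (hU : U.Nonempty)
    (hobs : ∀ s ∈ U, ∀ s' ∈ U, M.obs s = M.obs s') (σ : Strategy S A Z M.obs) (n : ℕ) :
    (M.reinit U hU hobs).probReachBy T σ n
      = (U.card : ℝ)⁻¹ * ∑ t ∈ U, (M.resetDirac t).probReachBy T σ n := by
  rw [probReachBy_eq_sum (M.reinit U hU hobs) T σ n]
  have key : ∀ h ∈ histFinset S A n,
      (if visitsT T h then (M.reinit U hU hobs).hprob σ n h else 0)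
        = ∑ t ∈ U, (U.card : ℝ)⁻¹ * (if visitsT T h then (M.resetDirac t).hprob σ n h else 0) := by
    intro h _
    simp only [hprob, hprobAux_reinit M U hU hobs σ n h.1 h.2]
    split_ifs with hv
    · rw [Finset.mul_sum]
    · simp
  rw [Finset.sum_congr rfl key, Finset.sum_comm]
  simp only [probReachBy_eq_sum, Finset.mul_sum]
  refine Finset.sum_congr rfl fun t _ => ?_
  rw [probReachBy_eq_sum (M.resetDirac t) T σ n, Finset.mul_sum]

lemma almostSure_reinit [Nonempty S] [Nonempty A] (M : POMDP S A Z) (T : Set S) (U : Finset S)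
    (hU : U.Nonempty) (hobs : ∀ s ∈ U, ∀ s' ∈ U, M.obs s = M.obs s')
    (σ : Strategy S A Z M.obs)
    (hdir : ∀ t ∈ U, (M.resetDirac t).AlmostSure T σ) :
    (M.reinit U hU hobs).AlmostSure T σ := by
  have hcard : (0 : ℝ) < U.card := by exact_mod_cast Finset.card_pos.mpr hU
  have htend : ∀ t ∈ U, Tendsto (fun n => (M.resetDirac t).probReachBy T σ n) atTop (nhds 1) := by
    intro t ht
    have h1 := tendsto_atTop_ciSup ((M.resetDirac t).probReachBy_mono T σ)
      ((M.resetDirac t).probReachBy_bddAbove T σ)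
    rwa [show (⨆ i, (M.resetDirac t).probReachBy T σ i) = 1 from hdir t ht] at h1
  have htend2 : Tendsto (fun n => (M.reinit U hU hobs).probReachBy T σ n) atTop (nhds 1) := by
    have h2 : Tendsto (fun n => (U.card : ℝ)⁻¹ * ∑ t ∈ U, (M.resetDirac t).probReachBy T σ n)
        atTop (nhds ((U.card : ℝ)⁻¹ * ∑ t ∈ U, (1:ℝ))) := by
      apply Tendsto.const_mul
      exact tendsto_finset_sum U fun t ht => htend t ht
    have h3 : (U.card : ℝ)⁻¹ * ∑ t ∈ U, (1:ℝ) = 1 := by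
      rw [Finset.sum_const, nsmul_eq_mul, mul_one, inv_mul_cancel₀ (ne_of_gt hcard)]
    rw [h3] at h2
    have h4 : (fun n => (M.reinit U hU hobs).probReachBy T σ n)
        = fun n => (U.card : ℝ)⁻¹ * ∑ t ∈ U, (M.resetDirac t).probReachBy T σ n := by
      funext n; exact M.probReachBy_reinit T U hU hobs σ n
    rw [h4]
    exact h2
  have h5 := tendsto_atTop_ciSup ((M.reinit U hU hobs).probReachBy_mono T σ)
    ((M.reinit U hU hobs).probReachBy_bddAbove T σ)
  exact tendsto_nhds_unique h5 htend2

lemma obs_of_mem_beliefAux (M : POMDP S A Z) (U0 : Finset S) :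
    ∀ (l : List (A × S)) (s t : S), t ∈ M.beliefOfFromAux U0 s l → M.obs t = M.obs s
  | [], s, t => by
      intro ht
      simp only [beliefOfFromAux, Finset.mem_filter] at ht
      exact ht.2
  | (a, s') :: r, s, t => by
      intro ht
      simp only [beliefOfFromAux, updateF, Finset.mem_filter] at ht
      exact ht.2.1

lemma realize (M : POMDP S A Z) (σ : Strategy S A Z M.obs) :
    ∀ (l : List (A × S)) (s t : S),
      M.hprobAux σ l.length s l ≠ 0 → t ∈ M.beliefOfFromAux M.suppInitF s l →
      ∃ l' : List (A × S),
        l'.map (fun p => (p.1, M.obs p.2)) = l.map (fun p => (p.1, M.obs p.2)) ∧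
        l'.length = l.length ∧ M.hprobAux σ l.length t l' ≠ 0
  | [], s, t => by
      intro _ ht
      simp only [beliefOfFromAux, suppInitF, Finset.mem_filter] at ht
      refine ⟨[], rfl, rfl, ?_⟩
      show (if ([] : List (A × S)) = [] then M.init t else 0) ≠ 0
      rw [if_pos rfl]
      exact ne_of_gt ht.1.2
  | (a, s') :: r, s, t => by
      intro hne ht
      simp only [beliefOfFromAux, updateF, Finset.mem_filter] at ht
      obtain ⟨-, hobs_t, u, hu, hδ⟩ := ht
      have hlen : ((a, s') :: r).length = r.length + 1 := rfl
      rw [hlen] at hne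
      simp only [hprobAux] at hne
      have h1 : M.hprobAux σ r.length s' r ≠ 0 := fun h => hne (by rw [h]; ring)
      have h2 : σ.act (s', r) a ≠ 0 := fun h => hne (by rw [h]; ring)
      obtain ⟨l'', hmap, hlen'', hne''⟩ := realize M σ r s' u h1 hu
      have hobs_u : M.obs u = M.obs s' := M.obs_of_mem_beliefAux _ r s' u hu
      refine ⟨(a, u) :: l'', ?_, ?_, ?_⟩
      · simp [hmap, hobs_u]
      · simp [hlen'']
      · rw [hlen]
        simp only [hprobAux]
        have hact : σ.act (u, l'') = σ.act (s', r) := by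
          apply σ.obsBased
          simp [obsHist, hmap, hobs_u]
        rw [hact]
        exact mul_ne_zero (mul_ne_zero hne'' h2) (ne_of_gt hδ)

def shiftStrat {O : S → Z} [Fintype A] (σ : Strategy S A Z O) (rest : List (A × S)) :
    Strategy S A Z O where
  act h := σ.act (h.1, h.2 ++ rest)
  act_nonneg h a := σ.act_nonneg _ a
  act_sum h := σ.act_sum _
  obsBased h h' he := by
    apply σ.obsBased
    simp only [obsHist, Prod.mk.injEq, List.map_append] at he ⊢
    exact ⟨he.1, by rw [he.2]⟩

lemma decomp (M : POMDP S A Z) (σ : Strategy S A Z M.obs) (t0 : S) (rest : List (A × S)) :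
    ∀ (l : List (A × S)) (s : S),
      (M.resetDirac t0).hprobAux (shiftStrat σ rest) l.length s l ≠ 0 →
      M.hprobAux σ (l.length + rest.length) s (l ++ rest)
        = (M.resetDirac t0).hprobAux (shiftStrat σ rest) l.length s l
            * M.hprobAux σ rest.length t0 rest
  | [], s => by
      intro hne
      have hs : s = t0 := by
        by_contra hc
        apply hne
        simp [hprobAux, resetDirac, hc]
      subst hs
      have h1 : (M.resetDirac s).hprobAux (shiftStrat σ rest) ([] : List (A × S)).length s [] = 1 := by
        simp [hprobAux, resetDirac]
      rw [h1, one_mul]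
      simp
  | (a, s') :: r, s => by
      intro hne
      have hL : ((a, s') :: r).length = r.length + 1 := rfl
      rw [hL] at hne ⊢
      have hL2 : ((a, s') :: r) ++ rest = (a, s') :: (r ++ rest) := rfl
      have hL3 : r.length + 1 + rest.length = (r.length + rest.length) + 1 := by omega
      rw [hL2, hL3]
      simp only [hprobAux] at hne ⊢
      have h1 : (M.resetDirac t0).hprobAux (shiftStrat σ rest) r.length s' r ≠ 0 :=
        fun h => hne (by rw [h]; ring)
      rw [decomp M σ t0 rest r s' h1]
      have hact : (shiftStrat σ rest).act (s', r) a = σ.act (s', r ++ rest) a := rfl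
      have hδ : (M.resetDirac t0).δ s' a s = M.δ s' a s := rfl
      change _ = (M.resetDirac t0).hprobAux (shiftStrat σ rest) r.length s' r
          * σ.act (s', r ++ rest) a * M.δ s' a s * M.hprobAux σ rest.length t0 rest
      ring

lemma absorb_eq (M : POMDP S A Z) {T : Set S} (habs : M.Absorbing T) {u : S} (hu : u ∈ T)
    {a : A} {s : S} (h : M.δ u a s ≠ 0) : s ∈ T := by
  by_contra hs
  have hne : s ≠ u := fun he => hs (he ▸ hu)
  have hsum := M.δ_sum u a
  rw [← Finset.add_sum_erase _ _ (Finset.mem_univ u), habs u hu a] at hsum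
  have hz : ∑ s' ∈ Finset.univ.erase u, M.δ u a s' = 0 := by linarith
  have := (Finset.sum_eq_zero_iff_of_nonneg (fun s' _ => M.δ_nonneg u a s')).mp hz s
    (Finset.mem_erase.mpr ⟨hne, Finset.mem_univ s⟩)
  exact h this

lemma not_visits (M : POMDP S A Z) {T : Set S} (habs : M.Absorbing T)
    (σ : Strategy S A Z M.obs) :
    ∀ (l : List (A × S)) (s : S), M.hprobAux σ l.length s l ≠ 0 → s ∉ T →
      ∀ p ∈ l, p.2 ∉ T
  | [], s => by intro _ _ p hp; simp at hp
  | (a, s') :: r, s => by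
      intro hne hs p hp
      have hL : ((a, s') :: r).length = r.length + 1 := rfl
      rw [hL] at hne
      simp only [hprobAux] at hne
      have h1 : M.hprobAux σ r.length s' r ≠ 0 := fun h => hne (by rw [h]; ring)
      have hδ : M.δ s' a s ≠ 0 := fun h => hne (by rw [h]; ring)
      have hs' : s' ∉ T := fun hT => hs (M.absorb_eq habs hT hδ)
      rcases List.mem_cons.mp hp with rfl | hp'
      · exact hs'
      · exact not_visits M habs σ r s' h1 hs' p hp'

lemma visitsT_append_of {T : Set S} {h : Hist S A} (hv : visitsT T h) (rest : List (A × S)) :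
    visitsT T ((h.1, h.2 ++ rest) : Hist S A) := by
  rcases hv with hv | ⟨p, hp, hpT⟩
  · exact Or.inl hv
  · exact Or.inr ⟨p, List.mem_append.mpr (Or.inl hp), hpT⟩

lemma key_bound [Nonempty S] [Nonempty A] (M : POMDP S A Z) (T : Set S)
    (σ : Strategy S A Z M.obs) (t0 : S) (rest : List (A × S))
    (ht0 : t0 ∉ T) (hrest : ∀ p ∈ rest, p.2 ∉ T) (m : ℕ) :
    M.probReachBy T σ (m + rest.length)
      ≤ 1 - (1 - (M.resetDirac t0).probReachBy T (shiftStrat σ rest) m)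
            * M.hprobAux σ rest.length t0 rest := by
  set C := M.hprobAux σ rest.length t0 rest with hCdef
  set M' := M.resetDirac t0 with hM'
  set σ' := shiftStrat σ rest with hσ'
  set N := m + rest.length with hN
  have hsplit : ∀ (MM : POMDP S A Z) (σσ : Strategy S A Z MM.obs) (k : ℕ),
      1 - MM.probReachBy T σσ k
        = ∑ h ∈ histFinset S A k, (if visitsT T h then 0 else MM.hprob σσ k h) := by
    intro MM σσ k
    rw [probReachBy_eq_sum, ← MM.sum_hprob σσ k, ← Finset.sum_sub_distrib]
    apply Finset.sum_congr rfl
    intro h _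
    split_ifs <;> ring
  have h1 := hsplit M σ N
  have h2 := hsplit M' σ' m
  have hmain : ∑ h ∈ histFinset S A m, (if visitsT T h then 0 else M'.hprob σ' m h) * C
      ≤ ∑ h ∈ histFinset S A N, (if visitsT T h then 0 else M.hprob σ N h) := by
    have hinj : ∀ x ∈ histFinset S A m, ∀ y ∈ histFinset S A m,
        (fun τ : Hist S A => (τ.1, τ.2 ++ rest)) x = (fun τ : Hist S A => (τ.1, τ.2 ++ rest)) y
          → x = y := by
      rintro ⟨x1, x2⟩ _ ⟨y1, y2⟩ _ he
      simp only [Prod.mk.injEq] at he ⊢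
      exact ⟨he.1, List.append_cancel_right he.2⟩
    calc ∑ h ∈ histFinset S A m, (if visitsT T h then 0 else M'.hprob σ' m h) * C
        ≤ ∑ τ ∈ histFinset S A m,
            (if visitsT T ((τ.1, τ.2 ++ rest) : Hist S A) then 0
              else M.hprob σ N (τ.1, τ.2 ++ rest)) := by
          apply Finset.sum_le_sum
          intro τ hτ
          have hmem : τ.2.length = m := mem_histFinset.mp hτ
          have hiff : visitsT T ((τ.1, τ.2 ++ rest) : Hist S A) → visitsT T τ := by
            rintro (hv | ⟨p, hp, hpT⟩)
            · exact Or.inl hv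
            · rcases List.mem_append.mp hp with hp' | hp'
              · exact Or.inr ⟨p, hp', hpT⟩
              · exact absurd hpT (hrest p hp')
          by_cases hz : M'.hprob σ' m τ = 0
          · have hL : (if visitsT T τ then 0 else M'.hprob σ' m τ) * C = 0 := by
              split_ifs <;> simp [hz]
            rw [hL]
            split_ifs
            · exact le_refl 0
            · exact M.hprobAux_nonneg σ _ _ _
          · have hz' : M'.hprobAux σ' τ.2.length τ.1 τ.2 ≠ 0 := by rw [hmem]; exact hz
            have hdec := M.decomp σ t0 rest τ.2 τ.1 hz'
            rw [hmem] at hdec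
            by_cases hv : visitsT T τ
            · rw [if_pos hv, if_pos (visitsT_append_of hv rest)]
              simp
            · rw [if_neg hv, if_neg (fun hx => hv (hiff hx))]
              have : M.hprob σ N ((τ.1, τ.2 ++ rest) : Hist S A) = M'.hprob σ' m τ * C := hdec
              rw [this]
      _ = ∑ h ∈ (histFinset S A m).image (fun τ : Hist S A => (τ.1, τ.2 ++ rest)),
            (if visitsT T h then 0 else M.hprob σ N h) := (Finset.sum_image (f := fun h : Hist S A => if visitsT T h then 0 else M.hprob σ N h) hinj).symm
      _ ≤ ∑ h ∈ histFinset S A N, (if visitsT T h then 0 else M.hprob σ N h) := by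
          apply Finset.sum_le_sum_of_subset_of_nonneg
          · intro x hx
            obtain ⟨τ, hτ, rfl⟩ := Finset.mem_image.mp hx
            rw [mem_histFinset]
            simp [List.length_append, mem_histFinset.mp hτ, hN, Nat.add_comm]
          · intro h _ _
            split_ifs
            · exact le_refl 0
            · exact M.hprobAux_nonneg σ _ _ _
  rw [← Finset.sum_mul] at hmain
  rw [← h1, ← h2] at hmain
  have hM'σ' : M'.probReachBy T σ' m
      = (M.resetDirac t0).probReachBy T (shiftStrat σ rest) m := rfl
  rw [hM'σ'] at hmain
  linarith

end POMDP

/-- If, with positive probability, a strategy `σ` reaches a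
history whose belief-support `U` is almost-sure winning and plays there some
action outside `Allow(U)` with positive probability, then `σ` is not
almost-sure winning for `Reach(T)`. -/
theorem not_almostSure_of_plays_disallowed
    {S A Z : Type} [Fintype S] [Fintype A] [Fintype Z]
    (M : POMDP S A Z) (T : Set S)
    (habs : M.Absorbing T)
    (hinit : M.suppInitF ∈ M.BeliefWin T)
    (σ : Strategy S A Z M.obs)
    (hbad : ∃ (n : ℕ) (h : Hist S A), 0 < M.hprob σ n h ∧
      M.beliefOf h ∈ M.BeliefWin T ∧
      ∃ a, a ∉ M.AllowSet T (M.beliefOf h) ∧ 0 < σ.act h a) :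
    ¬ M.AlmostSure T σ := by
  obtain ⟨n, h, hp, hUwin, a, hnota, hacta⟩ := hbad
  haveI : Nonempty S := by
    by_contra hS
    rw [not_nonempty_iff] at hS
    have h0 := M.init_sum
    rw [Finset.univ_eq_empty, Finset.sum_empty] at h0
    exact zero_ne_one h0
  haveI : Nonempty A := by
    by_contra hA
    rw [not_nonempty_iff] at hA
    have h0 := σ.act_sum h
    rw [Finset.univ_eq_empty, Finset.sum_empty] at h0
    exact zero_ne_one h0
  have hlen : h.2.length = n := M.hprobAux_length σ n h.1 h.2 (ne_of_gt hp)
  set U := M.beliefOf h with hUdef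
  simp only [POMDP.AllowSet, Set.mem_setOf_eq] at hnota
  push_neg at hnota
  obtain ⟨z, hzne, hznot⟩ := hnota
  set U' := M.updateF U z a with hU'def
  have hobs' : ∀ s ∈ U', ∀ s' ∈ U', M.obs s = M.obs s' := by
    intro s hs s' hs'
    simp only [hU'def, POMDP.updateF, Finset.mem_filter] at hs hs'
    rw [hs.2.1, hs'.2.1]
  obtain ⟨t1, ht1⟩ := hzne
  have hbuild : ∀ t ∈ U', ∃ restt : List (A × S),
      restt.map (fun p => (p.1, M.obs p.2))
        = (a, M.obs h.1) :: h.2.map (fun p => (p.1, M.obs p.2)) ∧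
      M.hprobAux σ restt.length t restt ≠ 0 := by
    intro t ht
    simp only [hU'def, POMDP.updateF, Finset.mem_filter] at ht
    obtain ⟨-, htz, s, hsU, hδ⟩ := ht
    have hpne : M.hprobAux σ h.2.length h.1 h.2 ≠ 0 := by
      rw [hlen]; exact ne_of_gt hp
    obtain ⟨l', hmap, hlen', hne''⟩ := M.realize σ h.2 h.1 s hpne hsU
    have hobs_s : M.obs s = M.obs h.1 := M.obs_of_mem_beliefAux _ h.2 h.1 s hsU
    refine ⟨(a, s) :: l', ?_, ?_⟩
    · simp [hmap, hobs_s]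
    · show M.hprobAux σ (l'.length + 1) t ((a, s) :: l') ≠ 0
      simp only [POMDP.hprobAux]
      have hact : σ.act (s, l') = σ.act h := by
        apply σ.obsBased
        simp [obsHist, hmap, hobs_s]
      rw [hact, hlen']
      exact mul_ne_zero (mul_ne_zero hne'' (ne_of_gt hacta)) (ne_of_gt hδ)
  obtain ⟨restc, hmapc, hnec⟩ := hbuild t1 ht1
  set σ'' := POMDP.shiftStrat σ restc with hσ''
  have hA : ∃ t ∈ U', ¬ (M.resetDirac t).AlmostSure T σ'' := by
    by_contra hall
    push_neg at hall
    exact hznot ⟨⟨t1, ht1⟩, hobs', σ'',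
      M.almostSure_reinit T U' ⟨t1, ht1⟩ hobs' σ'' hall⟩
  obtain ⟨t, htU', htnotAS⟩ := hA
  obtain ⟨restt, hmapt, hnet⟩ := hbuild t htU'
  set σt := POMDP.shiftStrat σ restt with hσt
  have hacteq : σt.act = σ''.act := by
    funext hh
    show σ.act (hh.1, hh.2 ++ restt) = σ.act (hh.1, hh.2 ++ restc)
    apply σ.obsBased
    simp [obsHist, List.map_append, hmapt, hmapc]
  have hle1 := (M.resetDirac t).probReach_le_one T σ''
  have hASne : (M.resetDirac t).probReach T σ'' ≠ 1 := htnotAS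
  set ε0 := 1 - (M.resetDirac t).probReach T σ'' with hε0
  have hε0pos : 0 < ε0 := by
    have := lt_of_le_of_ne hle1 hASne
    simp only [hε0]
    linarith
  have htT : t ∉ T := by
    intro htT
    apply hASne
    have h0 : (M.resetDirac t).probReachBy T σ'' 0 = 1 := by
      rw [POMDP.probReachBy_eq_sum (M.resetDirac t) T σ'' 0, POMDP.sum_hist_zero]
      have key : ∀ s : S,
          (if POMDP.visitsT T ((s, []) : Hist S A) then (M.resetDirac t).hprob σ'' 0 (s, []) else 0)
            = (M.resetDirac t).init s := by
        intro s
        by_cases hst : s = t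
        · subst hst
          rw [if_pos (show POMDP.visitsT T ((s, []) : Hist S A) from Or.inl htT)]
          simp [POMDP.hprob, POMDP.hprobAux]
        · have hz2 : (M.resetDirac t).hprob σ'' 0 ((s, []) : Hist S A) = 0 := by
            simp [POMDP.hprob, POMDP.hprobAux, POMDP.resetDirac, hst]
          rw [hz2]
          simp [POMDP.resetDirac, hst]
      rw [Finset.sum_congr rfl (fun s _ => key s)]
      exact (M.resetDirac t).init_sum
    have hge := (M.resetDirac t).probReachBy_le_probReach T σ'' 0
    rw [h0] at hge
    linarith
  have hrestT : ∀ p ∈ restt, p.2 ∉ T := M.not_visits habs σ restt t hnet htT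
  set Creal := M.hprobAux σ restt.length t restt with hCreal
  have hCpos : 0 < Creal :=
    lt_of_le_of_ne (M.hprobAux_nonneg σ _ _ _) (Ne.symm hnet)
  have hkey : ∀ m, M.probReachBy T σ (m + restt.length) ≤ 1 - ε0 * Creal := by
    intro m
    have hb := M.key_bound T σ t restt htT hrestT m
    have hm : (M.resetDirac t).probReachBy T (POMDP.shiftStrat σ restt) m ≤ 1 - ε0 := by
      have he : (M.resetDirac t).probReachBy T (POMDP.shiftStrat σ restt) m
          = (M.resetDirac t).probReachBy T σ'' m := by
        unfold POMDP.probReachBy POMDP.hprob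
        simp only [POMDP.hprob_congr (M.resetDirac t) (POMDP.shiftStrat σ restt) σ'' hacteq]
      rw [he]
      have hle := (M.resetDirac t).probReachBy_le_probReach T σ'' m
      simp only [hε0]
      linarith
    have hmul : ε0 * Creal
        ≤ (1 - (M.resetDirac t).probReachBy T (POMDP.shiftStrat σ restt) m) * Creal := by
      apply mul_le_mul_of_nonneg_right _ (le_of_lt hCpos)
      linarith
    linarith
  have hfin : ∀ N, M.probReachBy T σ N ≤ 1 - ε0 * Creal := by
    intro N
    rcases le_or_gt restt.length N with hNl | hNl
    · have hNe : N = (N - restt.length) + restt.length := (Nat.sub_add_cancel hNl).symm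
      rw [hNe]
      exact hkey _
    · calc M.probReachBy T σ N ≤ M.probReachBy T σ (0 + restt.length) :=
          M.probReachBy_mono T σ (by omega)
        _ ≤ _ := hkey 0
  intro hAS
  have hle : M.probReach T σ ≤ 1 - ε0 * Creal := ciSup_le hfin
  have h1 : M.probReach T σ = 1 := hAS
  have hpos : 0 < ε0 * Creal := mul_pos hε0pos hCpos
  linarith
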